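/- Let K ⊆ ℝ² be a compact convex set with nonempty interior and let C ⊆ ℝ² be a fixed compact set containing 0 (e.g. a cube centered suitably). If for every boundary point x ∈ ∂K there exists a > 0 with (K − x) ∩ aC ≠ {0}, then there exists δ > 0 such that for all a < δ and all x ∈ ∂K, (K − x) ∩ aC ≠ {0}. -/

import Mathlib

open Set
open scoped Pointwise RealInnerProductSpace Topology

private lemma key14 (K : Set (EuclideanSpace ℝ (Fin 2))) (hK : IsClosed K) (hconv : Convex ℝ K)
    {x : EuclideanSpace ℝ (Fin 2)} (hx : x ∈ K) {c : EuclideanSpace ℝ (Fin 2)} (hc : c ≠ 0)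
    {a : ℝ} (ha : 0 < a) (hp : x + a • c ∈ K)
    {xs : ℕ → EuclideanSpace ℝ (Fin 2)} (hxs : ∀ n, xs n ∈ K)
    (hxlim : Filter.Tendsto xs Filter.atTop (𝓝 x))
    {as : ℕ → ℝ} (has : ∀ n, 0 < as n) (halim : Filter.Tendsto as Filter.atTop (𝓝 (0:ℝ)))
    (hbad : ∀ n, xs n + as n • c ∉ K) : False := by
  classical
  -- Step 1: separating unit normals
  have H : ∀ n, ∃ v : EuclideanSpace ℝ (Fin 2), ‖v‖ = 1 ∧ 0 < ⟪v, c⟫ ∧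
      ∀ b ∈ K, ⟪v, b - xs n⟫ < as n * ⟪v, c⟫ := by
    intro n
    obtain ⟨f, u, hfK, hfu⟩ := geometric_hahn_banach_closed_point hconv hK (hbad n)
    have hsep : ∀ b ∈ K, f b < f (xs n) + as n * f c := by
      intro b hb
      have h1 : f b < u := hfK b hb
      have h2 : u < f (xs n) + as n * f c := by
        have : f (xs n + as n • c) = f (xs n) + as n * f c := by
          rw [map_add, map_smul]; rfl
        linarith [hfu, this ▸ hfu]
      linarith
    have hfc : 0 < f c := by
      have := hsep (xs n) (hxs n)
      nlinarith [has n]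
    set v0 := (InnerProductSpace.toDual ℝ (EuclideanSpace ℝ (Fin 2))).symm f with hv0def
    have hv0 : ∀ y, ⟪v0, y⟫ = f y := fun y => InnerProductSpace.toDual_symm_apply
    have hv0c : 0 < ⟪v0, c⟫ := by rw [hv0]; exact hfc
    have hv0ne : v0 ≠ 0 := by
      intro h0
      rw [h0, inner_zero_left] at hv0c; exact lt_irrefl 0 hv0c
    have hn0 : (0:ℝ) < ‖v0‖ := norm_pos_iff.mpr hv0ne
    refine ⟨‖v0‖⁻¹ • v0, ?_, ?_, ?_⟩
    · rw [norm_smul, norm_inv, norm_norm, inv_mul_cancel₀ hn0.ne']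
    · rw [real_inner_smul_left]
      positivity
    · intro b hb
      rw [real_inner_smul_left, real_inner_smul_left]
      have h1 : ⟪v0, b - xs n⟫ < as n * ⟪v0, c⟫ := by
        rw [hv0, hv0, map_sub]
        have := hsep b hb
        linarith
      have h2 : ‖v0‖⁻¹ * ⟪v0, b - xs n⟫ < ‖v0‖⁻¹ * (as n * ⟪v0, c⟫) :=
        (mul_lt_mul_iff_right₀ (by positivity)).mpr h1
      calc ‖v0‖⁻¹ * ⟪v0, b - xs n⟫ < ‖v0‖⁻¹ * (as n * ⟪v0, c⟫) := h2
        _ = as n * (‖v0‖⁻¹ * ⟪v0, c⟫) := by ring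
  choose w hw1 hw2 hw3 using H
  -- Step 2: convergent subsequence of normals
  have hwsph : ∀ n, w n ∈ Metric.sphere (0 : EuclideanSpace ℝ (Fin 2)) 1 := by
    intro n; rw [mem_sphere_zero_iff_norm]; exact hw1 n
  obtain ⟨wl, hwlmem, φ, hφ, hwconv⟩ :=
    (isCompact_sphere (0 : EuclideanSpace ℝ (Fin 2)) 1).tendsto_subseq hwsph
  have hwl1 : ‖wl‖ = 1 := mem_sphere_zero_iff_norm.mp hwlmem
  have hxφ : Filter.Tendsto (fun n => xs (φ n)) Filter.atTop (𝓝 x) :=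
    hxlim.comp hφ.tendsto_atTop
  have haφ : Filter.Tendsto (fun n => as (φ n)) Filter.atTop (𝓝 (0:ℝ)) :=
    halim.comp hφ.tendsto_atTop
  -- Step 3: limit supporting functional
  have hK0 : ∀ b ∈ K, ⟪wl, b - x⟫ ≤ 0 := by
    intro b hb
    have hL : Filter.Tendsto (fun n => ⟪w (φ n), b - xs (φ n)⟫) Filter.atTop
        (𝓝 ⟪wl, b - x⟫) := hwconv.inner (tendsto_const_nhds.sub hxφ)
    have hR : Filter.Tendsto (fun n => as (φ n) * ⟪w (φ n), c⟫) Filter.atTop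
        (𝓝 (0 * ⟪wl, c⟫)) := haφ.mul (hwconv.inner tendsto_const_nhds)
    rw [zero_mul] at hR
    exact le_of_tendsto_of_tendsto hL hR
      (Filter.Eventually.of_forall fun n => (hw3 (φ n) b hb).le)
  have hwc_nonneg : 0 ≤ ⟪wl, c⟫ := by
    have hL : Filter.Tendsto (fun n => ⟪w (φ n), c⟫) Filter.atTop (𝓝 ⟪wl, c⟫) :=
      hwconv.inner tendsto_const_nhds
    exact le_of_tendsto_of_tendsto tendsto_const_nhds hL
      (Filter.Eventually.of_forall fun n => (hw2 (φ n)).le)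
  have hwc0 : ⟪wl, c⟫ = 0 := by
    have h1 := hK0 (x + a • c) hp
    rw [add_sub_cancel_left, real_inner_smul_right] at h1
    nlinarith
  -- Step 4: orthonormal basis {wl, e} of ℝ²
  have hcn : (0:ℝ) < ‖c‖ := norm_pos_iff.mpr hc
  set e : EuclideanSpace ℝ (Fin 2) := ‖c‖⁻¹ • c with he_def
  have he1 : ‖e‖ = 1 := by
    rw [he_def, norm_smul, norm_inv, norm_norm, inv_mul_cancel₀ hcn.ne']
  have hwe : ⟪wl, e⟫ = 0 := by rw [he_def, real_inner_smul_right, hwc0, mul_zero]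
  have hce : c = ‖c‖ • e := by rw [he_def, smul_smul, mul_inv_cancel₀ hcn.ne', one_smul]
  set v : Fin 2 → EuclideanSpace ℝ (Fin 2) := ![wl, e] with hv_def
  have hww : ⟪wl, wl⟫ = 1 := by rw [real_inner_self_eq_norm_sq, hwl1]; norm_num
  have hee : ⟪e, e⟫ = 1 := by rw [real_inner_self_eq_norm_sq, he1]; norm_num
  have hew : ⟪e, wl⟫ = 0 := by rw [real_inner_comm]; exact hwe
  have hon : Orthonormal ℝ v := by
    constructor
    · intro i
      fin_cases i
      · simpa only [hv_def, Fin.zero_eta, Matrix.cons_val_zero] using hwl1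
      · simpa only [hv_def, Fin.mk_one, Matrix.cons_val_zero, Matrix.cons_val_one, Matrix.head_cons] using he1
    · intro i j hij
      fin_cases i <;> fin_cases j
      · exact absurd rfl hij
      · simpa only [hv_def, Fin.zero_eta, Fin.mk_one, Matrix.cons_val_zero, Matrix.cons_val_one, Matrix.head_cons]
          using hwe
      · simpa only [hv_def, Fin.zero_eta, Fin.mk_one, Matrix.cons_val_zero, Matrix.cons_val_one, Matrix.head_cons]
          using hew
      · exact absurd rfl hij
  have hspan : Submodule.span ℝ (Set.range v) = ⊤ := by
    apply hon.linearIndependent.span_eq_top_of_card_eq_finrank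
    simp [finrank_euclideanSpace]
  set B : OrthonormalBasis (Fin 2) ℝ (EuclideanSpace ℝ (Fin 2)) :=
    OrthonormalBasis.mk hon hspan.ge with hB_def
  have hBcoe : ∀ i, B i = v i := fun i => by rw [hB_def, OrthonormalBasis.coe_mk]
  have hdecomp : ∀ (u z : EuclideanSpace ℝ (Fin 2)),
      ⟪u, z⟫ = ⟪u, wl⟫ * ⟪wl, z⟫ + ⟪u, e⟫ * ⟪e, z⟫ := by
    intro u z
    have := B.sum_inner_mul_inner u z
    rw [Fin.sum_univ_two, hBcoe 0, hBcoe 1] at this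
    simpa [hv_def] using this.symm
  -- Step 5: pick a good large index
  have hβ : Filter.Tendsto (fun n => ⟪w (φ n), wl⟫) Filter.atTop (𝓝 ⟪wl, wl⟫) :=
    hwconv.inner tendsto_const_nhds
  have hβpos : ∀ᶠ n in Filter.atTop, 0 ≤ ⟪w (φ n), wl⟫ := by
    have h1 : (0:ℝ) < ⟪wl, wl⟫ := by
      rw [real_inner_self_eq_norm_sq, hwl1]; norm_num
    exact (hβ.eventually (eventually_gt_nhds h1)).mono fun n hn => hn.le
  have hclose : ∀ᶠ n in Filter.atTop, ‖x - xs (φ n)‖ < a * ‖c‖ / 2 := by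
    have : Filter.Tendsto (fun n => ‖x - xs (φ n)‖) Filter.atTop (𝓝 ‖x - x‖) :=
      (tendsto_const_nhds.sub hxφ).norm
    rw [sub_self, norm_zero] at this
    exact this.eventually (eventually_lt_nhds (by positivity))
  have hsmall : ∀ᶠ n in Filter.atTop, as (φ n) < a / 2 :=
    haφ.eventually (eventually_lt_nhds (by positivity))
  obtain ⟨n, hn1, hn2, hn3⟩ := (hβpos.and (hclose.and hsmall)).exists
  -- Step 6: final contradiction at index m := φ n
  set m := φ n with hm_def
  have hγpos : 0 < ⟪w m, e⟫ := by
    have h1 := hw2 m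
    rw [hce, real_inner_smul_right] at h1
    nlinarith [hcn]
  have hwmc : ⟪w m, c⟫ = ‖c‖ * ⟪w m, e⟫ := by
    conv_lhs => rw [hce]
    rw [real_inner_smul_right]
  have hmain := hw3 m (x + a • c) hp
  have hsplit : ⟪w m, x + a • c - xs m⟫ = ⟪w m, x - xs m⟫ + a * ⟪w m, c⟫ := by
    have h0 : x + a • c - xs m = (x - xs m) + a • c := by abel
    rw [h0, inner_add_right, real_inner_smul_right]
  have hxterm : ⟪w m, e⟫ * (-(a * ‖c‖ / 2)) ≤ ⟪w m, x - xs m⟫ := by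
    have hd := hdecomp (w m) (x - xs m)
    have h1 : 0 ≤ ⟪wl, x - xs m⟫ := by
      have hb := hK0 (xs m) (hxs m)
      have h2 : ⟪wl, x - xs m⟫ = -⟪wl, xs m - x⟫ := by
        rw [← inner_neg_right, neg_sub]
      rw [h2]; linarith
    have h2 : 0 ≤ ⟪w m, wl⟫ * ⟪wl, x - xs m⟫ := mul_nonneg hn1 h1
    have h3 : -(a * ‖c‖ / 2) ≤ ⟪e, x - xs m⟫ := by
      have habs : |⟪e, x - xs m⟫| ≤ ‖e‖ * ‖x - xs m‖ := abs_real_inner_le_norm e _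
      rw [he1, one_mul] at habs
      have habs2 := abs_le.mp habs
      linarith [hn2, habs2.1]
    have h4 : ⟪w m, e⟫ * (-(a * ‖c‖ / 2)) ≤ ⟪w m, e⟫ * ⟪e, x - xs m⟫ :=
      mul_le_mul_of_nonneg_left h3 hγpos.le
    linarith [hd, h2, h4]
  rw [hsplit, hwmc] at hmain
  have key1 : as m * (‖c‖ * ⟪w m, e⟫) < (a / 2) * (‖c‖ * ⟪w m, e⟫) :=
    mul_lt_mul_of_pos_right hn3 (mul_pos hcn hγpos)
  have key2 : ⟪w m, e⟫ * (-(a * ‖c‖ / 2)) + a * (‖c‖ * ⟪w m, e⟫)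
      = (a / 2) * (‖c‖ * ⟪w m, e⟫) := by ring
  linarith [hxterm, hmain, key1, key2]

/-- If a compact convex body `K` has no "critical" boundary points (for each
boundary point `x` there is a scale `a` with `(K - x) ∩ aC ≠ {0}`), then the
scale can be chosen uniformly over the boundary. -/
theorem stmt14 (K : Set (EuclideanSpace ℝ (Fin 2))) (hKc : IsCompact K)
    (hKconv : Convex ℝ K) (hKint : (interior K).Nonempty)
    (C : Set (EuclideanSpace ℝ (Fin 2))) (hCc : IsCompact C)
    (hC0 : (0 : EuclideanSpace ℝ (Fin 2)) ∈ C)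
    (h : ∀ x ∈ frontier K, ∃ a : ℝ, 0 < a ∧ ((fun y => y - x) '' K) ∩ (a • C) ≠ {0}) :
    ∃ δ : ℝ, 0 < δ ∧ ∀ a : ℝ, 0 < a → a < δ →
      ∀ x ∈ frontier K, ((fun y => y - x) '' K) ∩ (a • C) ≠ {0} := by
  classical
  by_contra hcon
  push_neg at hcon
  have hchoice : ∀ n : ℕ, ∃ a : ℝ, 0 < a ∧ a < 1 / (n + 1) ∧
      ∃ x ∈ frontier K, ((fun y => y - x) '' K) ∩ (a • C) = {0} := by
    intro n
    exact hcon (1 / (n + 1)) (by positivity)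
  choose as has1 has2 xs hxsfr hSn using hchoice
  have hfrK : frontier K ⊆ K := hKc.isClosed.frontier_subset
  have hfrc : IsCompact (frontier K) := hKc.of_isClosed_subset isClosed_frontier hfrK
  obtain ⟨x, hxfr, φ, hφ, hxlim⟩ := hfrc.tendsto_subseq hxsfr
  obtain ⟨a, ha, hne⟩ := h x hxfr
  have hxK : x ∈ K := hfrK hxfr
  have h0mem : (0 : EuclideanSpace ℝ (Fin 2)) ∈ ((fun y => y - x) '' K) ∩ (a • C) := by
    constructor
    · exact ⟨x, hxK, sub_self x⟩
    · have := smul_mem_smul_set (a := a) hC0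
      rwa [smul_zero] at this
  obtain ⟨y, hy, hyne⟩ : ∃ y ∈ ((fun y => y - x) '' K) ∩ (a • C), y ≠ 0 := by
    by_contra hall
    push_neg at hall
    exact hne (Set.eq_singleton_iff_unique_mem.mpr ⟨h0mem, hall⟩)
  obtain ⟨⟨k, hkK, hky⟩, hyC⟩ := hy
  obtain ⟨c, hcC, hcy⟩ := hyC
  have hcne : c ≠ 0 := by
    intro h0; apply hyne; rw [← hcy, h0]; simp
  have hky' : k - x = a • c := by
    have h1 : k - x = y := hky
    rw [h1, ← hcy]
  have hp : x + a • c ∈ K := by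
    have hk : k = a • c + x := sub_eq_iff_eq_add.mp hky'
    rw [show x + a • c = k from by rw [hk, add_comm]]
    exact hkK
  -- the bad sequence
  have hbad : ∀ n, xs (φ n) + as (φ n) • c ∉ K := by
    intro n hmem
    have h1 : as (φ n) • c ∈ ((fun y => y - xs (φ n)) '' K) ∩ (as (φ n) • C) := by
      constructor
      · exact ⟨xs (φ n) + as (φ n) • c, hmem, by simp⟩
      · exact smul_mem_smul_set hcC
    rw [hSn (φ n)] at h1
    have : as (φ n) • c = 0 := h1
    exact smul_ne_zero (has1 (φ n)).ne' hcne this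
  have haφ : Filter.Tendsto (fun n => as (φ n)) Filter.atTop (𝓝 (0:ℝ)) := by
    apply tendsto_of_tendsto_of_tendsto_of_le_of_le (g := fun _ => (0:ℝ))
      (h := fun n : ℕ => 1 / (n + 1)) tendsto_const_nhds
      tendsto_one_div_add_atTop_nhds_zero_nat
      (fun n => (has1 (φ n)).le)
    intro n
    have h1 : as (φ n) < 1 / (φ n + 1) := has2 (φ n)
    have h2 : (1 : ℝ) / (φ n + 1) ≤ 1 / (n + 1) := by
      apply one_div_le_one_div_of_le (by positivity)
      have hle : n ≤ φ n := hφ.le_apply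
      have : (n : ℝ) ≤ φ n := by exact_mod_cast hle
      linarith
    linarith
  exact key14 K hKc.isClosed hKconv hxK hcne ha hp
    (fun n => hfrK (hxsfr (φ n))) hxlim (fun n => has1 (φ n)) haφ hbad
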